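/- For all y ∈ (1, ∞), the second derivative of the digamma function satisfies ψ''(y) ≥ -1/(y - 1/2)². -/

import Mathlib

open Real Filter Asymptotics MeasureTheory Set Topology

noncomputable def trigamma (y : ℝ) : ℝ := ∑' m : ℕ, 1 / (m + y)^2

noncomputable def psi2 (y : ℝ) : ℝ := -2 * ∑' m : ℕ, 1 / (m + y)^3

theorem stmt3 (y : ℝ) (hy : 1 < y) : psi2 y ≥ -1/(y - 1/2)^2 := by
  have hy2 : (0:ℝ) < y - 1/2 := by linarith
  set f : ℕ → ℝ := fun m => 1 / ((m:ℝ) + y - 1/2)^2 with hf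
  have hpos : ∀ m : ℕ, (0:ℝ) < (m:ℝ) + y - 1/2 := by
    intro m
    have : (0:ℝ) ≤ (m:ℝ) := Nat.cast_nonneg m
    linarith
  have hterm : ∀ m : ℕ, 2 * (1 / ((m:ℝ) + y)^3) ≤ f m - f (m+1) := by
    intro m
    have hm : (0:ℝ) ≤ (m:ℝ) := Nat.cast_nonneg m
    have ha : (0:ℝ) < (m:ℝ) + y := by linarith
    have h1 := hpos m
    have h2 := hpos (m+1)
    have h2' : (0:ℝ) < (m:ℝ) + 1 + y - 1/2 := by push_cast at h2; linarith
    simp only [hf, Nat.cast_add, Nat.cast_one]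
    rw [le_sub_iff_add_le, mul_one_div,
      div_add_div _ _ (pow_ne_zero 3 ha.ne') (pow_ne_zero 2 h2'.ne'),
      div_le_div_iff₀ (by positivity) (pow_pos h1 2)]
    nlinarith [sq_nonneg ((m:ℝ)+y), sq_nonneg (((m:ℝ)+y)^2 - 1/4), mul_pos ha ha,
      mul_pos (mul_pos ha ha) ha, sq_nonneg ((m:ℝ)+y-1/2), sq_nonneg ((m:ℝ)+y+1/2)]
  have hnonneg : ∀ m : ℕ, 0 ≤ 2 * (1 / ((m:ℝ) + y)^3) := by
    intro m
    have hm : (0:ℝ) ≤ (m:ℝ) := Nat.cast_nonneg m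
    have : (0:ℝ) < (m:ℝ) + y := by linarith
    positivity
  have hgnonneg : ∀ m : ℕ, 0 ≤ f m - f (m+1) := fun m => le_trans (hnonneg m) (hterm m)
  have htend : Tendsto f atTop (𝓝 0) := by
    have h1 : Tendsto (fun m : ℕ => ((m:ℝ) + y - 1/2)^2) atTop atTop := by
      have h0 : Tendsto (fun m : ℕ => (m:ℝ) + y - 1/2) atTop atTop := by
        simpa [add_sub_assoc] using
          tendsto_atTop_add_const_right atTop (y - 1/2) tendsto_natCast_atTop_atTop
      exact (tendsto_pow_atTop two_ne_zero).comp h0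
    simpa [hf, one_div, Pi.inv_def] using h1.inv_tendsto_atTop
  have hsum_g : HasSum (fun m => f m - f (m+1)) (f 0) := by
    rw [hasSum_iff_tendsto_nat_of_nonneg hgnonneg]
    have : ∀ n : ℕ, ∑ i ∈ Finset.range n, (f i - f (i+1)) = f 0 - f n := by
      intro n
      exact Finset.sum_range_sub' f n
    simp only [this]
    simpa using tendsto_const_nhds.sub htend
  have hsumA : Summable (fun m : ℕ => 2 * (1 / ((m:ℝ) + y)^3)) :=
    Summable.of_nonneg_of_le hnonneg hterm hsum_g.summable
  have hle : ∑' m : ℕ, 2 * (1 / ((m:ℝ) + y)^3) ≤ f 0 := by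
    rw [← hsum_g.tsum_eq]
    exact Summable.tsum_le_tsum hterm hsumA hsum_g.summable
  rw [tsum_mul_left] at hle
  have hf0 : f 0 = 1/(y - 1/2)^2 := by simp [hf]
  rw [hf0] at hle
  simp only [psi2, ge_iff_le, neg_div]
  linarith
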